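/- For every ℓ ≥ 1, with S_n := #{i : b_i < a_n}, the identity a_n = ℓ + 1 + n + S_n holds for all n ≥ 0, for the sequences defined by the mex recursion. -/
import Mathlib


/-- The minimum excluded value of a set of natural numbers. -/
noncomputable def mex (S : Set ℕ) : ℕ := sInf {m : ℕ | m ∉ S}

/-- `MexSeq ℓ a b` says that `a`, `b` are the sequences defined by
    `a 0 = ℓ+1`, `b 0 = 2ℓ+2`, and for `n ≥ 1`:
    `a n = mex({a i, b i : i < n} ∪ {0,…,ℓ})`, `b n = a n + n + ℓ + 1`. -/
def MexSeq (ℓ : ℕ) (a b : ℕ → ℕ) : Prop :=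
  a 0 = ℓ + 1 ∧ b 0 = 2 * ℓ + 2 ∧
  (∀ n : ℕ, 1 ≤ n →
    a n = mex ({m : ℕ | ∃ i < n, m = a i ∨ m = b i} ∪ {m : ℕ | m ≤ ℓ})) ∧
  (∀ n : ℕ, 1 ≤ n → b n = a n + n + ℓ + 1)

theorem mexSeq_count_identity (ℓ : ℕ) (hℓ : 1 ≤ ℓ) (a b : ℕ → ℕ)
    (hab : MexSeq ℓ a b) :
    ∀ n : ℕ, a n = ℓ + 1 + n + Set.ncard {i : ℕ | b i < a n} := by
  classical
  obtain ⟨ha0, hb0, ha, hb⟩ := hab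
  have hbf : ∀ n, b n = a n + n + ℓ + 1 := by
    intro n
    rcases Nat.eq_zero_or_pos n with h | h
    · subst h; omega
    · exact hb n h
  set T : ℕ → Set ℕ := fun n =>
    {m : ℕ | ∃ i < n, m = a i ∨ m = b i} ∪ {m : ℕ | m ≤ ℓ} with hT
  -- finiteness of T n
  have hTfin : ∀ n, (T n).Finite := by
    intro n
    apply Set.Finite.union
    · have hsub : {m : ℕ | ∃ i < n, m = a i ∨ m = b i} ⊆
          (↑((Finset.range n).image a ∪ (Finset.range n).image b) : Set ℕ) := by
        rintro m ⟨i, hi, h | h⟩ <;>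
          · simp only [Finset.coe_union, Set.mem_union, Finset.coe_image,
              Set.mem_image, Finset.mem_coe, Finset.mem_range]
            first
            | exact Or.inl ⟨i, by simpa using hi, h.symm⟩
            | exact Or.inr ⟨i, by simpa using hi, h.symm⟩
      exact Set.Finite.subset (Finset.finite_toSet _) hsub
    · exact Set.finite_Iic ℓ
  -- every m < a n lies in T n (for n ≥ 1)
  have hmem : ∀ n, 1 ≤ n → ∀ m, m < a n → m ∈ T n := by
    intro n hn m hm
    by_contra hmn
    have h1 : a n ≤ m := by
      rw [ha n hn]
      exact Nat.sInf_le hmn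
    omega
  have hnotmem : ∀ n, 1 ≤ n → a n ∉ T n := by
    intro n hn
    rw [ha n hn]
    have : {m : ℕ | m ∉ T n}.Nonempty := by
      have := (hTfin n).infinite_compl
      exact this.nonempty
    exact Nat.sInf_mem this
  have hgt : ∀ n, ℓ < a n := by
    intro n
    rcases Nat.eq_zero_or_pos n with h | h
    · subst h; omega
    · by_contra hc
      exact hnotmem n h (Or.inr (by simpa using Nat.le_of_not_lt hc))
  have hmono : StrictMono a := by
    apply strictMono_nat_of_lt_succ
    intro n
    have hne : a (n + 1) ≠ a n := by
      intro h
      exact hnotmem (n + 1) (by omega) (Or.inl ⟨n, by omega, Or.inl h⟩)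
    rcases Nat.lt_or_ge (a (n + 1)) (a n) with hlt | hge
    · exfalso
      rcases Nat.eq_zero_or_pos n with h0 | h0
      · subst h0
        have h1 := hgt 1
        simp only [Nat.zero_add, zero_add] at hlt
        omega
      · have hmem' := hmem n h0 (a (n + 1)) hlt
        apply hnotmem (n + 1) (by omega)
        rcases hmem' with ⟨i, hi, h⟩ | h
        · exact Or.inl ⟨i, by omega, h⟩
        · exact Or.inr h
    · omega
  have hbmono : StrictMono b := by
    intro i j hij
    have := hmono hij
    have h1 := hbf i
    have h2 := hbf j
    omega
  have hab_ne : ∀ i j, a i ≠ b j := by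
    intro i j h
    rcases Nat.lt_or_ge j i with hji | hji
    · exact hnotmem i (by omega) (Or.inl ⟨j, hji, Or.inr h⟩)
    · have h1 : a i ≤ a j := hmono.monotone hji
      have h2 := hbf j
      omega
  have hcov : ∀ n m, m < a n → m ≤ ℓ ∨ ∃ i < n, m = a i ∨ m = b i := by
    intro n m hm
    rcases Nat.eq_zero_or_pos n with h0 | h0
    · subst h0; left; omega
    · rcases hmem n h0 m hm with h | h
      · exact Or.inr h
      · exact Or.inl h
  intro n
  have hbi_lt : ∀ i, b i < a n → i < n := by
    intro i h
    by_contra hc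
    have h1 : a n ≤ a i := hmono.monotone (by omega)
    have h2 := hbf i
    omega
  set F := (Finset.range n).filter (fun i => b i < a n) with hF
  have hset : {i : ℕ | b i < a n} = ↑F := by
    ext i
    simp only [Set.mem_setOf_eq, hF, Finset.coe_filter, Finset.mem_range]
    exact ⟨fun h => ⟨hbi_lt i h, h⟩, fun h => h.2⟩
  have hunion : Finset.range (a n) =
      (Finset.range (ℓ + 1) ∪ (Finset.range n).image a) ∪ F.image b := by
    ext m
    simp only [Finset.mem_union, Finset.mem_image, Finset.mem_range,
      Finset.mem_filter, hF]
    constructor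
    · intro hm
      rcases hcov n m hm with h | ⟨i, hi, h | h⟩
      · exact Or.inl (Or.inl (by omega))
      · exact Or.inl (Or.inr ⟨i, hi, h.symm⟩)
      · exact Or.inr ⟨i, ⟨hi, h ▸ hm⟩, h.symm⟩
    · rintro ((h | ⟨i, hi, rfl⟩) | ⟨i, ⟨hi, hbi⟩, rfl⟩)
      · have := hgt n; omega
      · exact hmono hi
      · exact hbi
  have hd1 : Disjoint (Finset.range (ℓ + 1)) ((Finset.range n).image a) := by
    rw [Finset.disjoint_left]
    rintro m hm hm'
    simp only [Finset.mem_image, Finset.mem_range] at hm hm'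
    obtain ⟨i, _, rfl⟩ := hm'
    have := hgt i
    omega
  have hd2 : Disjoint (Finset.range (ℓ + 1) ∪ (Finset.range n).image a)
      (F.image b) := by
    rw [Finset.disjoint_left]
    rintro m hm hm'
    simp only [Finset.mem_union, Finset.mem_image, Finset.mem_range,
      Finset.mem_filter, hF] at hm hm'
    obtain ⟨j, _, rfl⟩ := hm'
    have hbj := hbf j
    have hgj := hgt j
    rcases hm with h | ⟨i, _, h⟩
    · omega
    · exact hab_ne i j h
  have hcard := congrArg Finset.card hunion
  rw [Finset.card_union_of_disjoint hd2, Finset.card_union_of_disjoint hd1,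
    Finset.card_image_of_injective _ hmono.injective,
    Finset.card_image_of_injective _ hbmono.injective] at hcard
  simp only [Finset.card_range] at hcard
  rw [hset, Set.ncard_coe_finset]
  omega
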